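/- Fix an integer k ≥ 1. Then R_n^{(k,0,0,0)}(x,q) = [n]_q! for all n ≤ k, and for every s ≥ 1, R_{k+s}^{(k,0,0,0)}(x,q) = [k]_q! · Π_{i=1}^{s} ([k]_q + x·q^k·[i]_q). -/

import Mathlib

/-- The variable `x` of the two-variable polynomial ring. -/
noncomputable def xv : MvPolynomial (Fin 2) ℤ := MvPolynomial.X 0

/-- The variable `q` of the two-variable polynomial ring. -/
noncomputable def qv : MvPolynomial (Fin 2) ℤ := MvPolynomial.X 1

/-- `[m]_q = 1 + q + ⋯ + q^{m-1}`. -/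
noncomputable def qNat (m : ℕ) : MvPolynomial (Fin 2) ℤ :=
  ∑ i ∈ Finset.range m, qv ^ i

/-- `[m]_q! = [1]_q [2]_q ⋯ [m]_q`, with `[0]_q! = 1`. -/
noncomputable def qFact (m : ℕ) : MvPolynomial (Fin 2) ℤ :=
  ∏ i ∈ Finset.range m, qNat (i + 1)

/-- Number of points in quadrant I relative to `(i, σ i)`. -/
def quad1 {n : ℕ} (σ : Equiv.Perm (Fin n)) (i : Fin n) : ℕ :=
  (Finset.univ.filter (fun j => i < j ∧ σ i < σ j)).card

/-- `mmp^{(k,0,0,0)}(σ)`: the number of indices `i` with at least `k` points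
in quadrant I relative to `(i, σ i)`. -/
def mmpK {n : ℕ} (k : ℕ) (σ : Equiv.Perm (Fin n)) : ℕ :=
  (Finset.univ.filter (fun i => k ≤ quad1 σ i)).card

/-- `coinv(σ)`: the number of pairs `i < j` with `σ i < σ j`. -/
def coinv {n : ℕ} (σ : Equiv.Perm (Fin n)) : ℕ :=
  (Finset.univ.filter (fun p : Fin n × Fin n => p.1 < p.2 ∧ σ p.1 < σ p.2)).card

/-- `R_n^{(k,0,0,0)}(x,q) = Σ_{σ ∈ S_n} x^{mmp^{(k,0,0,0)}(σ)} q^{coinv(σ)}`. -/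
noncomputable def Rq (k n : ℕ) : MvPolynomial (Fin 2) ℤ :=
  ∑ σ : Equiv.Perm (Fin n), xv ^ mmpK k σ * qv ^ coinv σ

section Helpers
open Finset Equiv


/-- Insert value `v` at position 0. -/
def ins (n : ℕ) (v : Fin (n+1)) (e : Equiv.Perm (Fin n)) : Equiv.Perm (Fin (n+1)) :=
  (finSuccEquiv n).trans ((e.optionCongr).trans (finSuccEquiv' v).symm)

lemma ins_zero {n : ℕ} (v : Fin (n+1)) (e : Equiv.Perm (Fin n)) : ins n v e 0 = v := by
  simp [ins]

lemma ins_succ {n : ℕ} (v : Fin (n+1)) (e : Equiv.Perm (Fin n)) (i : Fin n) :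
    ins n v e i.succ = v.succAbove (e i) := by
  simp [ins, finSuccEquiv_succ, finSuccEquiv'_symm_some]

lemma ins_bijective (n : ℕ) :
    Function.Bijective (fun p : Fin (n+1) × Equiv.Perm (Fin n) => ins n p.1 p.2) := by
  rw [Fintype.bijective_iff_injective_and_card]
  refine ⟨?_, by simp [Fintype.card_perm, Nat.factorial_succ]⟩
  rintro ⟨v, e⟩ ⟨w, f⟩ h
  simp only at h
  have hv : v = w := by
    have h0 : ins n v e 0 = ins n w f 0 := by rw [h]
    simpa [ins_zero] using h0
  subst hv
  have he : e = f := by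
    ext i
    have hi : ins n v e i.succ = ins n v f i.succ := by rw [h]
    rw [ins_succ, ins_succ] at hi
    exact congrArg Fin.val (Fin.succAbove_right_injective hi)
  rw [he]

lemma quad1_ins_zero {n : ℕ} (v : Fin (n+1)) (e : Equiv.Perm (Fin n)) :
    quad1 (ins n v e) 0 = n - v := by
  rw [quad1, Finset.card_filter, Fin.sum_univ_succ]
  simp only [ins_zero, ins_succ, lt_irrefl, false_and, if_false, zero_add, Fin.succ_pos, true_and]
  rw [Equiv.sum_comp e (fun w => if v < v.succAbove w then (1:ℕ) else 0)]
  simp only [Fin.lt_succAbove_iff_le_castSucc]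
  have : ∀ w : Fin n, (v ≤ Fin.castSucc w) = ((v:ℕ) ≤ (w:ℕ)) := by
    intro w; simp [Fin.le_def]
  simp only [this]
  rw [Fin.sum_univ_eq_sum_range (fun i => if (v:ℕ) ≤ i then (1:ℕ) else 0) n,
    ← Finset.card_filter]
  have : Finset.filter (fun i => (v:ℕ) ≤ i) (Finset.range n) = Finset.Ico (v:ℕ) n := by
    ext i; simp [Finset.mem_Ico, and_comm]
  rw [this, Nat.card_Ico]

lemma quad1_ins_succ {n : ℕ} (v : Fin (n+1)) (e : Equiv.Perm (Fin n)) (i : Fin n) :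
    quad1 (ins n v e) i.succ = quad1 e i := by
  rw [quad1, quad1, Finset.card_filter, Finset.card_filter, Fin.sum_univ_succ]
  simp only [ins_succ, Fin.not_lt_zero, false_and, if_false, zero_add,
    Fin.succ_lt_succ_iff, Fin.succAbove_lt_succAbove_iff]

lemma mmpK_ins {n : ℕ} (k : ℕ) (v : Fin (n+1)) (e : Equiv.Perm (Fin n)) :
    mmpK k (ins n v e) = (if k ≤ n - (v:ℕ) then 1 else 0) + mmpK k e := by
  rw [mmpK, mmpK, Finset.card_filter, Finset.card_filter, Fin.sum_univ_succ, quad1_ins_zero]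
  simp only [quad1_ins_succ]

lemma coinv_eq_sum {n : ℕ} (σ : Equiv.Perm (Fin n)) : coinv σ = ∑ i, quad1 σ i := by
  rw [coinv, Finset.card_filter, ← Finset.univ_product_univ, Finset.sum_product]
  simp only [quad1, Finset.card_filter]

lemma coinv_ins {n : ℕ} (v : Fin (n+1)) (e : Equiv.Perm (Fin n)) :
    coinv (ins n v e) = (n - (v:ℕ)) + coinv e := by
  rw [coinv_eq_sum, coinv_eq_sum, Fin.sum_univ_succ, quad1_ins_zero]
  simp only [quad1_ins_succ]

noncomputable def Aq (k n : ℕ) : MvPolynomial (Fin 2) ℤ :=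
  ∑ t ∈ Finset.range (n+1), (if k ≤ t then xv else 1) * qv ^ t

lemma Rq_succ (k n : ℕ) : Rq k (n+1) = Aq k n * Rq k n := by
  rw [Rq, ← Fintype.sum_bijective _ (ins_bijective n)
    (fun p : Fin (n+1) × Equiv.Perm (Fin n) => xv ^ mmpK k (ins n p.1 p.2) * qv ^ coinv (ins n p.1 p.2))
    (fun σ => xv ^ mmpK k σ * qv ^ coinv σ) (fun p => rfl)]
  rw [Fintype.sum_prod_type]
  have key : ∀ (v : Fin (n+1)) (e : Equiv.Perm (Fin n)),
      xv ^ mmpK k (ins n v e) * qv ^ coinv (ins n v e)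
      = ((if k ≤ n - (v:ℕ) then xv else 1) * qv ^ (n - (v:ℕ))) * (xv ^ mmpK k e * qv ^ coinv e) := by
    intro v e
    rw [mmpK_ins, coinv_ins, pow_add, pow_add]
    have : xv ^ (if k ≤ n - (v:ℕ) then 1 else 0) = (if k ≤ n - (v:ℕ) then xv else 1) := by
      split_ifs <;> simp
    rw [this]; ring
  simp only [key]
  rw [← Finset.sum_mul_sum Finset.univ Finset.univ
    (fun v : Fin (n+1) => (if k ≤ n - (v:ℕ) then xv else 1) * qv ^ (n - (v:ℕ)))
    (fun e : Equiv.Perm (Fin n) => xv ^ mmpK k e * qv ^ coinv e)]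
  rw [Rq, Aq]
  congr 1
  rw [Fin.sum_univ_eq_sum_range (fun i => (if k ≤ n - i then xv else 1) * qv ^ (n - i)) (n+1)]
  rw [← Finset.sum_range_reflect (fun t => (if k ≤ t then xv else 1) * qv ^ t) (n+1)]
  exact Finset.sum_congr rfl fun i hi => by simp

lemma Aq_of_lt {k n : ℕ} (h : n + 1 ≤ k) : Aq k n = qNat (n+1) := by
  rw [Aq, qNat]
  refine Finset.sum_congr rfl fun t ht => ?_
  rw [Finset.mem_range] at ht
  rw [if_neg (by omega), one_mul]

lemma Aq_of_ge {k n : ℕ} (h : k ≤ n) : Aq k n = qNat k + xv * qv ^ k * qNat (n+1-k) := by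
  rw [Aq, Finset.range_eq_Ico,
    ← Finset.sum_Ico_consecutive (fun t => (if k ≤ t then xv else 1) * qv ^ t)
      (Nat.zero_le k) (by omega : k ≤ n+1)]
  congr 1
  · rw [qNat, Finset.range_eq_Ico]
    refine Finset.sum_congr rfl fun t ht => ?_
    rw [Finset.mem_Ico] at ht
    rw [if_neg (by omega), one_mul]
  · rw [Finset.sum_Ico_eq_sum_range]
    rw [qNat, Finset.mul_sum]
    refine Finset.sum_congr rfl fun t ht => ?_
    rw [if_pos (by omega), pow_add]
    ring

lemma Rq_zero (k : ℕ) : Rq k 0 = 1 := by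
  rw [Rq]
  have : ∀ σ : Equiv.Perm (Fin 0), xv ^ mmpK k σ * qv ^ coinv σ = 1 := by
    intro σ
    have h1 : mmpK k σ = 0 := by simp [mmpK]
    have h2 : coinv σ = 0 := by simp [coinv]
    simp [h1, h2]
  simp only [this]
  simp

end Helpers

theorem stmt_7 (k : ℕ) (hk : 1 ≤ k) :
    (∀ n, n ≤ k → Rq k n = qFact n) ∧
    (∀ s, 1 ≤ s → Rq k (k + s) =
      qFact k * ∏ i ∈ Finset.Icc 1 s, (qNat k + xv * qv ^ k * qNat i)) := by

  have h1 : ∀ n, n ≤ k → Rq k n = qFact n := by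
    intro n
    induction n with
    | zero => intro _; simp [Rq_zero, qFact]
    | succ m ih =>
      intro hm
      rw [Rq_succ, Aq_of_lt hm, ih (by omega), qFact, qFact, Finset.prod_range_succ, mul_comm]
  refine ⟨h1, ?_⟩
  intro s hs
  induction s with
  | zero => omega
  | succ m ih =>
    rcases Nat.eq_zero_or_pos m with h0 | hm
    · subst h0
      rw [Rq_succ, Aq_of_ge le_rfl, h1 k le_rfl]
      simp only [Nat.add_sub_cancel_left]
      rw [show (0:ℕ) + 1 = 1 from rfl, Finset.Icc_self, Finset.prod_singleton, mul_comm]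
    · rw [show k + (m+1) = (k + m) + 1 from rfl, Rq_succ, Aq_of_ge (by omega),
        ih (by omega), show k + m + 1 - k = m + 1 from by omega,
        Finset.prod_Icc_succ_top (by omega : 1 ≤ m + 1)]
      ring
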